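/- For N ≥ 3, the Bernasconi objective function f^bern_N : {0,1}^N → ℝ, defined by f^bern_N(x) = Σ_{d=1}^{N-1} ( Σ_{i=1}^{N-d} (2x_i - 1)(2x_{i+d} - 1) )², admits a linearization of size at most N² with respect to the family B of all Boolean functions, i.e., lc_B(f^bern_N) ≤ N². -/

import Mathlib

open Finset

/-- The set of binary vectors in `ℝ^n`. -/
def IsBinary {n : ℕ} (x : Fin n → ℝ) : Prop := ∀ i, x i = 0 ∨ x i = 1

/-- `f` admits a linearization of size `k` with respect to the family `G`. -/
def HasLin {n : ℕ} (G : Set ((Fin n → ℝ) → ℝ)) (f : (Fin n → ℝ) → ℝ) (k : ℕ) : Prop :=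
  ∃ (g : Fin k → (Fin n → ℝ) → ℝ) (a : Fin n → ℝ) (β : ℝ) (b : Fin k → ℝ),
    (∀ i, g i ∈ G) ∧ ∀ x : Fin n → ℝ, IsBinary x →
      f x = ∑ i, a i * x i + β + ∑ i, b i * g i x

/-- The linearization complexity of `f` with respect to `G` (possibly `⊤` = ∞). -/
noncomputable def lc {n : ℕ} (G : Set ((Fin n → ℝ) → ℝ)) (f : (Fin n → ℝ) → ℝ) : ℕ∞ :=
  sInf {k : ℕ∞ | ∃ m : ℕ, k = (m : ℕ∞) ∧ HasLin G f m}

/-- The family of all Boolean functions (on binary inputs). -/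
def BoolFam (n : ℕ) : Set ((Fin n → ℝ) → ℝ) :=
  {g | ∀ x : Fin n → ℝ, IsBinary x → g x = 0 ∨ g x = 1}

/-- Extend a vector `x ∈ ℝ^N` to a function on `ℕ` by zero. -/
def ext {N : ℕ} (x : Fin N → ℝ) (i : ℕ) : ℝ := if h : i < N then x ⟨i, h⟩ else 0

/-- The Bernasconi objective function on `{0,1}^N`. -/
def fbern (N : ℕ) : (Fin N → ℝ) → ℝ := fun x =>
  ∑ d ∈ Finset.Icc 1 (N - 1),
    (∑ i ∈ Finset.range (N - d), (2 * ext x i - 1) * (2 * ext x (i + d) - 1)) ^ 2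

/-- Padding: a linearization of size `m ≤ k` gives one of size `k`, provided the zero
function belongs to the family. -/
lemma hasLin_mono {n : ℕ} {G : Set ((Fin n → ℝ) → ℝ)} {f} {m k : ℕ}
    (h0 : (fun _ => (0:ℝ)) ∈ G) (hmk : m ≤ k) (h : HasLin G f m) : HasLin G f k := by
  obtain ⟨g, a, β, b, hg, hf⟩ := h
  refine ⟨fun i => if h : (i:ℕ) < m then g ⟨i, h⟩ else (fun _ => 0), a, β,
    fun i => if h : (i:ℕ) < m then b ⟨i, h⟩ else 0, ?_, ?_⟩
  · intro i; by_cases h : (i:ℕ) < m <;> simp [h, hg, h0]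
  · intro x hx
    rw [hf x hx]
    congr 1
    symm
    dsimp only
    set F : ℕ → ℝ := fun i => if h : i < m then b ⟨i, h⟩ * g ⟨i, h⟩ x else 0 with hF
    calc ∑ i : Fin k, (if h : (i:ℕ) < m then b ⟨i, h⟩ else 0) *
          (if h : (i:ℕ) < m then g ⟨i, h⟩ else (fun _ => 0)) x
          = ∑ i : Fin k, F (i : ℕ) := by
            refine Finset.sum_congr rfl fun i _ => ?_
            by_cases h : (i:ℕ) < m <;> simp [hF, h]
      _ = ∑ i ∈ Finset.range k, F i := Fin.sum_univ_eq_sum_range F k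
      _ = ∑ i ∈ Finset.range m, F i := by
            refine (Finset.sum_subset (Finset.range_subset_range.2 hmk) fun i _ hi => ?_).symm
            simp only [Finset.mem_range, not_lt] at hi
            simp [hF, Nat.not_lt.2 hi]
      _ = ∑ i : Fin m, F (i : ℕ) := (Fin.sum_univ_eq_sum_range F m).symm
      _ = ∑ i : Fin m, b i * g i x := by
            refine Finset.sum_congr rfl fun i _ => ?_
            simp [hF, i.2]

/-- A representation as a combination over a finset of family members gives a
linearization of size `T.card`, hence any size `k ≥ T.card`. -/
lemma hasLin_of_finset {n : ℕ} {G : Set ((Fin n → ℝ) → ℝ)} {f} {ι : Type*}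
    (T : Finset ι) (Gt : ι → (Fin n → ℝ) → ℝ) (c : ι → ℝ)
    (hG : ∀ t ∈ T, Gt t ∈ G)
    (hf : ∀ x, IsBinary x → f x = ∑ t ∈ T, c t * Gt t x) :
    HasLin G f T.card := by
  classical
  let e : ↥T ≃ Fin T.card := T.equivFin
  refine ⟨fun i => Gt (e.symm i : ι), fun _ => 0, 0, fun i => c (e.symm i : ι), ?_, ?_⟩
  · intro i; exact hG _ (e.symm i).2
  · intro x hx
    rw [hf x hx]
    simp only [zero_mul, Finset.sum_const_zero, zero_add]
    rw [← Finset.sum_attach T (fun t => c t * Gt t x)]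
    exact (Equiv.sum_comp e.symm fun t => c (t : ι) * Gt (t : ι) x).symm

lemma sum_odd_sq (n : ℕ) : ∑ j ∈ Finset.range n, (2 * j + 1) = n ^ 2 := by
  induction n with
  | zero => simp
  | succ n ih => rw [Finset.sum_range_succ, ih]; ring

/-- A sum of `±1`-valued terms is an integer of absolute value at most the number of terms. -/
lemma sum_pm_one (s : Finset ℕ) (f : ℕ → ℝ) (hf : ∀ i ∈ s, f i = 1 ∨ f i = -1) :
    ∃ m : ℤ, (∑ i ∈ s, f i) = (m : ℝ) ∧ -(s.card : ℤ) ≤ m ∧ m ≤ s.card := by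
  classical
  induction s using Finset.induction_on with
  | empty => exact ⟨0, by simp⟩
  | insert a s hns ih =>
    obtain ⟨m, hm, hm1, hm2⟩ := ih fun i hi => hf i (Finset.mem_insert_of_mem hi)
    rcases hf a (Finset.mem_insert_self a s) with h | h
    · exact ⟨m + 1, by rw [Finset.sum_insert hns, hm, h]; push_cast; ring,
        by rw [Finset.card_insert_of_notMem hns]; push_cast; omega,
        by rw [Finset.card_insert_of_notMem hns]; push_cast; omega⟩
    · exact ⟨m - 1, by rw [Finset.sum_insert hns, hm, h]; push_cast; ring,
        by rw [Finset.card_insert_of_notMem hns]; push_cast; omega,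
        by rw [Finset.card_insert_of_notMem hns]; push_cast; omega⟩

theorem lc_bernasconi_le_sq (N : ℕ) (hN : 3 ≤ N) :
    lc (BoolFam N) (fbern N) ≤ ((N ^ 2 : ℕ) : ℕ∞) := by
  classical
  -- the inner sums
  set S : ℕ → (Fin N → ℝ) → ℝ := fun d x =>
    ∑ i ∈ Finset.range (N - d), (2 * ext x i - 1) * (2 * ext x (i + d) - 1) with hS
  -- index set
  set T : Finset ((_ : ℕ) × ℤ) :=
    (Finset.Icc 1 (N - 1)).sigma (fun d => Finset.Icc (-((N - d : ℕ) : ℤ)) ((N - d : ℕ) : ℤ))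
    with hT
  set Gt : ((_ : ℕ) × ℤ) → (Fin N → ℝ) → ℝ :=
    fun p x => if S p.1 x = (p.2 : ℝ) then 1 else 0 with hGt
  -- for binary x and d ≥ 1, S d x is an integer in the right range
  have key : ∀ (x : Fin N → ℝ), IsBinary x → ∀ d ∈ Finset.Icc 1 (N - 1),
      ∃ m : ℤ, S d x = (m : ℝ) ∧ m ∈ Finset.Icc (-((N - d : ℕ) : ℤ)) ((N - d : ℕ) : ℤ) := by
    intro x hx d hd
    simp only [Finset.mem_Icc] at hd
    have hside : ∀ i ∈ Finset.range (N - d),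
        (2 * ext x i - 1) * (2 * ext x (i + d) - 1) = 1 ∨
        (2 * ext x i - 1) * (2 * ext x (i + d) - 1) = -1 := by
      intro i hi
      simp only [Finset.mem_range] at hi
      have h1 : i < N := by omega
      have h2 : i + d < N := by omega
      have e1 : ext x i = x ⟨i, h1⟩ := dif_pos h1
      have e2 : ext x (i + d) = x ⟨i + d, h2⟩ := dif_pos h2
      rcases hx ⟨i, h1⟩ with h | h <;> rcases hx ⟨i + d, h2⟩ with h' | h' <;>
        rw [e1, e2, h, h'] <;> norm_num
    obtain ⟨m, hm, hm1, hm2⟩ := sum_pm_one (Finset.range (N - d))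
      (fun i => (2 * ext x i - 1) * (2 * ext x (i + d) - 1)) hside
    refine ⟨m, hm, ?_⟩
    simp only [Finset.mem_Icc]
    rw [Finset.card_range] at hm1 hm2
    omega
  -- the representation
  have hrep : ∀ x, IsBinary x → fbern N x = ∑ t ∈ T, ((t.2 : ℝ))^2 * Gt t x := by
    intro x hx
    rw [hT, Finset.sum_sigma]
    unfold fbern
    refine Finset.sum_congr rfl fun d hd => ?_
    obtain ⟨m, hm, hmI⟩ := key x hx d hd
    have : ∀ ℓ : ℤ, Gt ⟨d, ℓ⟩ x = if m = ℓ then 1 else 0 := by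
      intro ℓ
      simp only [hGt, hm, Int.cast_inj]
    simp only [this, mul_ite, mul_one, mul_zero]
    rw [Finset.sum_ite_eq, if_pos hmI, ← hm]
  -- cardinality bound
  have hcard : T.card ≤ N ^ 2 := by
    rw [hT, Finset.card_sigma]
    have h1 : ∀ d ∈ Finset.Icc 1 (N - 1),
        (Finset.Icc (-((N - d : ℕ) : ℤ)) ((N - d : ℕ) : ℤ)).card = 2 * (N - d) + 1 := by
      intro d hd
      rw [Int.card_Icc]
      have : ((N - d : ℕ) : ℤ) + 1 - (-((N - d : ℕ) : ℤ)) = ((2 * (N - d) + 1 : ℕ) : ℤ) := by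
        push_cast; ring
      rw [this, Int.toNat_natCast]

    rw [Finset.sum_congr rfl h1]
    have h2 : ∑ d ∈ Finset.Icc 1 (N - 1), (2 * (N - d) + 1) =
        ∑ j ∈ Finset.Icc 1 (N - 1), (2 * j + 1) := by
      refine Finset.sum_nbij' (fun d => N - d) (fun j => N - j) ?_ ?_ ?_ ?_ ?_ <;>
        intro a ha <;> simp only [Finset.mem_Icc] at * <;> omega
    rw [h2]
    calc ∑ j ∈ Finset.Icc 1 (N - 1), (2 * j + 1)
        ≤ ∑ j ∈ Finset.range N, (2 * j + 1) := by
          refine Finset.sum_le_sum_of_subset fun j hj => ?_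
          simp only [Finset.mem_Icc] at hj
          simp only [Finset.mem_range]; omega
      _ = N ^ 2 := sum_odd_sq N
  -- conclude
  have hlin : HasLin (BoolFam N) (fbern N) (N ^ 2) := by
    refine hasLin_mono ?_ hcard (hasLin_of_finset T Gt (fun t => ((t.2 : ℝ))^2) ?_ hrep)
    · intro x _; left; rfl
    · intro t _ x _
      simp only [hGt]
      split <;> simp
  exact sInf_le ⟨N ^ 2, rfl, hlin⟩
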